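/- Let b ∈ (0, +∞] and let (H, φ) solve the EdGB FLRW system on [0, b) with the negative-branch initial data with parameter β. Then H(t) > 1/(5t + 1/β) > 0 for all t ∈ (0, b). -/

import Mathlib

/-- The EdGB FLRW system on a set `I ⊆ ℝ`: `H` is continuously differentiable and
`φ` twice continuously differentiable on `I`, and for every `t ∈ I` the Hamiltonian
constraint `3H² − 3e^φ φ' H³ = φ'²/2` and the scalar field equation
`φ'' = −3Hφ' − 3e^φ H²(H² + H')` hold. -/
def EdGB (H φ : ℝ → ℝ) (I : Set ℝ) : Prop :=
  ContDiffOn ℝ 1 H I ∧ ContDiffOn ℝ 2 φ I ∧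
  (∀ t ∈ I, 3 * H t ^ 2 - 3 * Real.exp (φ t) * deriv φ t * H t ^ 3 = (deriv φ t) ^ 2 / 2) ∧
  (∀ t ∈ I, deriv (deriv φ) t =
      -3 * H t * deriv φ t - 3 * Real.exp (φ t) * H t ^ 2 * (H t ^ 2 + deriv H t))

/-- The negative-branch initial data with parameter `β`:
`H(0) = β`, `φ(0) = 0`, `φ'(0) = −3β³ − √(9β⁶ + 6β²)`, with `0 < β < √6/6`. -/
def NegBranchData (H φ : ℝ → ℝ) (β : ℝ) : Prop :=
  0 < β ∧ β < Real.sqrt 6 / 6 ∧ H 0 = β ∧ φ 0 = 0 ∧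
  deriv φ 0 = -3 * β ^ 3 - Real.sqrt (9 * β ^ 6 + 6 * β ^ 2)

open Topology Filter Set

lemma core_alg (E h p h' pp : ℝ) (hE : 0 < E) (hh : 0 < h) (hp : p < 0)
    (con : 3 * h ^ 2 - 3 * E * p * h ^ 3 = p ^ 2 / 2)
    (scal : pp = -3 * h * p - 3 * E * h ^ 2 * (h ^ 2 + h'))
    (dcon : 6 * h * h' - 3 * ((E * p * p + E * pp) * h ^ 3 + E * p * (3 * h ^ 2 * h')) - p * pp = 0) :
    -5 * h ^ 2 < h' := by
  have hD : 0 < 3 * E ^ 2 * h ^ 4 - 2 * E * h * p + 2 := by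
    nlinarith [mul_pos (mul_pos hE hh) (neg_pos.mpr hp), sq_nonneg (E * h ^ 2)]
  subst scal
  have h3 : (3 * h) * ((h' + 5 * h ^ 2) * (3 * E ^ 2 * h ^ 4 - 2 * E * h * p + 2)
      - (12 * E ^ 2 * h ^ 6 - 8 * E * h ^ 3 * p - 6 * E ^ 2 * h ^ 5 * p + 6 * E * h ^ 4 + 4 * h ^ 2)) = 0 := by
    linear_combination dcon - (6 * E * h ^ 3 - 6 * h) * con
  have h4 : (h' + 5 * h ^ 2) * (3 * E ^ 2 * h ^ 4 - 2 * E * h * p + 2)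
      = 12 * E ^ 2 * h ^ 6 - 8 * E * h ^ 3 * p - 6 * E ^ 2 * h ^ 5 * p + 6 * E * h ^ 4 + 4 * h ^ 2 := by
    rcases mul_eq_zero.mp h3 with h | h
    · nlinarith
    · linarith
  have hpos : 0 < (h' + 5 * h ^ 2) * (3 * E ^ 2 * h ^ 4 - 2 * E * h * p + 2) := by
    rw [h4]
    nlinarith [mul_pos (mul_pos hE (pow_pos hh 3)) (neg_pos.mpr hp),
      mul_pos (mul_pos (mul_pos hE hE) (pow_pos hh 5)) (neg_pos.mpr hp),
      mul_pos hE (pow_pos hh 4), pow_pos hh 2, sq_nonneg (E * h ^ 3)]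
  rcases mul_pos_iff.mp hpos with ⟨h1, _⟩ | ⟨_, h2⟩
  · linarith
  · linarith

lemma derivH_bound (r : ℝ) (H φ : ℝ → ℝ) (hsys : EdGB H φ (Set.Ico 0 r))
    (t : ℝ) (ht0 : 0 < t) (htr : t < r) (hHt : 0 < H t) (hpt : deriv φ t < 0) :
    -5 * H t ^ 2 < deriv H t := by
  obtain ⟨hH, hφ, hcon, hscal⟩ := hsys
  have hIoo : Set.Ioo (0:ℝ) r ⊆ Set.Ico 0 r := Set.Ioo_subset_Ico_self
  have hmem : Set.Ioo (0:ℝ) r ∈ 𝓝 t := isOpen_Ioo.mem_nhds ⟨ht0, htr⟩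
  have hIt : Set.Ico (0:ℝ) r ∈ 𝓝 t := Filter.mem_of_superset hmem hIoo
  have hHat : HasDerivAt H (deriv H t) t :=
    (((hH.contDiffAt hIt).differentiableAt one_ne_zero)).hasDerivAt
  have hφat : HasDerivAt φ (deriv φ t) t :=
    (((hφ.contDiffAt hIt).differentiableAt (by norm_num))).hasDerivAt
  have hφ2 : HasDerivAt (deriv φ) (deriv (deriv φ) t) t := by
    have h1 : ContDiffOn ℝ 2 φ (Set.Ioo 0 r) := hφ.mono hIoo
    have h2 : ContDiffOn ℝ 1 (deriv φ) (Set.Ioo 0 r) := by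
      have := h1.deriv_of_isOpen isOpen_Ioo (m := 1) (by norm_num)
      simpa using this
    exact (((h2.contDiffAt hmem).differentiableAt one_ne_zero)).hasDerivAt
  set E := Real.exp (φ t) with hE
  set h := H t
  set p := deriv φ t
  set h' := deriv H t
  set pp := deriv (deriv φ) t
  have hexp : HasDerivAt (fun s => Real.exp (φ s)) (E * p) t := hφat.exp
  have h1 : HasDerivAt (fun s => Real.exp (φ s) * deriv φ s) (E * p * p + E * pp) t :=
    hexp.mul hφ2
  have h2 : HasDerivAt (fun s => H s ^ 3) ((3:ℕ) * h ^ 2 * h') t := by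
    simpa using hHat.fun_pow 3
  have h3 : HasDerivAt (fun s => Real.exp (φ s) * deriv φ s * H s ^ 3)
      ((E * p * p + E * pp) * h ^ 3 + (E * p) * ((3:ℕ) * h ^ 2 * h')) t := h1.mul h2
  have h4 : HasDerivAt (fun s => H s ^ 2) ((2:ℕ) * h ^ 1 * h') t := hHat.pow 2
  have h5 : HasDerivAt (fun s => deriv φ s ^ 2) ((2:ℕ) * p ^ 1 * pp) t := hφ2.pow 2
  have hF : HasDerivAt (fun s => 3 * H s ^ 2 - 3 * (Real.exp (φ s) * deriv φ s * H s ^ 3)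
      - deriv φ s ^ 2 / 2)
      (3 * ((2:ℕ) * h ^ 1 * h') - 3 * ((E * p * p + E * pp) * h ^ 3 + (E * p) * ((3:ℕ) * h ^ 2 * h'))
        - ((2:ℕ) * p ^ 1 * pp) / 2) t :=
    ((h4.const_mul 3).sub (h3.const_mul 3)).sub (h5.div_const 2)
  have hzero : deriv (fun s => 3 * H s ^ 2 - 3 * (Real.exp (φ s) * deriv φ s * H s ^ 3)
      - deriv φ s ^ 2 / 2) t = 0 := by
    have hev : (fun s => 3 * H s ^ 2 - 3 * (Real.exp (φ s) * deriv φ s * H s ^ 3)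
        - deriv φ s ^ 2 / 2) =ᶠ[𝓝 t] (fun _ => 0) := by
      filter_upwards [hIt] with s hs
      have := hcon s hs
      ring_nf
      ring_nf at this
      linarith
    rw [hev.deriv_eq, deriv_const]
  have hval : 3 * ((2:ℕ) * h ^ 1 * h') - 3 * ((E * p * p + E * pp) * h ^ 3 + (E * p) * ((3:ℕ) * h ^ 2 * h'))
        - ((2:ℕ) * p ^ 1 * pp) / 2 = 0 := by
    rw [← hF.deriv]; exact hzero
  have dcon : 6 * h * h' - 3 * ((E * p * p + E * pp) * h ^ 3 + E * p * (3 * h ^ 2 * h')) - p * pp = 0 := by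
    push_cast at hval
    linear_combination hval
  exact core_alg E h p h' pp (Real.exp_pos _) hHt hpt (hcon t ⟨ht0.le, htr⟩) (hscal t ⟨ht0.le, htr⟩) dcon

lemma phi'_neg (r β : ℝ) (H φ : ℝ → ℝ) (hsys : EdGB H φ (Set.Ico 0 r))
    (hdata : NegBranchData H φ β) (s₀ : ℝ) (hs₀ : 0 ≤ s₀) (hs₀r : s₀ < r)
    (hHpos : ∀ u ∈ Set.Icc 0 s₀, 0 < H u) :
    ∀ u ∈ Set.Icc 0 s₀, deriv φ u < 0 := by
  obtain ⟨hH, hφ, hcon, hscal⟩ := hsys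
  obtain ⟨hβ, -, hH0, hφ0, hdφ0⟩ := hdata
  have hr0 : (0:ℝ) < r := lt_of_le_of_lt hs₀ hs₀r
  have hneg0 : deriv φ 0 < 0 := by
    rw [hdφ0]
    have := Real.sqrt_nonneg (9 * β ^ 6 + 6 * β ^ 2)
    nlinarith [pow_pos hβ 3]
  have hdiff0 : DifferentiableAt ℝ φ 0 := by
    by_contra hc
    rw [deriv_zero_of_not_differentiableAt hc] at hneg0
    exact lt_irrefl 0 hneg0
  set q := derivWithin φ (Set.Ico 0 r) with hq
  have hqcont : ContinuousOn q (Set.Ico 0 r) :=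
    hφ.continuousOn_derivWithin (uniqueDiffOn_Ico 0 r) one_le_two
  have hq_eq : ∀ u ∈ Set.Ico (0:ℝ) r, q u = deriv φ u := by
    intro u hu
    rcases eq_or_lt_of_le hu.1 with h0 | h0
    · rw [← h0]
      exact hdiff0.derivWithin ((uniqueDiffOn_Ico 0 r) 0 ⟨le_refl 0, hr0⟩)
    · exact derivWithin_of_mem_nhds
        (Filter.mem_of_superset (isOpen_Ioo.mem_nhds ⟨h0, hu.2⟩) Set.Ioo_subset_Ico_self)
  have hqne : ∀ u ∈ Set.Icc 0 s₀, q u ≠ 0 := by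
    intro u hu hq0
    rcases eq_or_lt_of_le hu.1 with h0 | h0
    · rw [← h0] at hq0
      rw [hq_eq 0 ⟨le_refl 0, hr0⟩] at hq0
      exact absurd hq0 (ne_of_lt hneg0)
    · have huI : u ∈ Set.Ico (0:ℝ) r := ⟨hu.1, lt_of_le_of_lt hu.2 hs₀r⟩
      have hc := hcon u huI
      rw [← hq_eq u huI, hq0] at hc
      have hHu := hHpos u hu
      nlinarith [hc]
  intro u hu
  have huI : u ∈ Set.Ico (0:ℝ) r := ⟨hu.1, lt_of_le_of_lt hu.2 hs₀r⟩
  rw [← hq_eq u huI]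
  by_contra hge
  push_neg at hge
  have hqu : 0 < q u := lt_of_le_of_ne hge (Ne.symm (hqne u hu))
  have hsub : Set.Icc (0:ℝ) u ⊆ Set.Ico 0 r := fun v hv =>
    ⟨hv.1, lt_of_le_of_lt hv.2 huI.2⟩
  have hivt := intermediate_value_Icc hu.1 (hqcont.mono hsub)
  have h0mem : (0:ℝ) ∈ Set.Icc (q 0) (q u) := by
    constructor
    · rw [hq_eq 0 ⟨le_refl 0, hr0⟩]; exact hneg0.le
    · exact hqu.le
  obtain ⟨v, hv, hv0⟩ := hivt h0mem
  exact hqne v ⟨hv.1, le_trans hv.2 hu.2⟩ hv0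

lemma phase1 (r β : ℝ) (H φ : ℝ → ℝ) (hsys : EdGB H φ (Set.Ico 0 r))
    (hdata : NegBranchData H φ β) (t : ℝ) (ht0 : 0 < t) (htr : t < r) :
    ∀ s ∈ Set.Icc 0 t, 1 ≤ H s * (5 * s + 2 / β) := by
  have hβ := hdata.1
  have hH0 := hdata.2.2.1
  set G : ℝ → ℝ := fun s => H s * (5 * s + 2 / β) with hGdef
  have hGcont : ContinuousOn G (Set.Ico 0 r) :=
    hsys.1.continuousOn.mul (by fun_prop)
  have hG0 : G 0 = 2 := by
    simp only [hGdef, hH0]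
    field_simp
    ring
  set A := {s : ℝ | s ∈ Set.Icc 0 t ∧ ∀ u ∈ Set.Icc 0 s, 1 ≤ G u} with hAdef
  have h0A : (0:ℝ) ∈ A := by
    refine ⟨⟨le_refl 0, ht0.le⟩, fun u hu => ?_⟩
    have : u = 0 := le_antisymm hu.2 hu.1
    rw [this, hG0]; norm_num
  have hbdd : BddAbove A := ⟨t, fun s hs => hs.1.2⟩
  set t₀ := sSup A with ht₀def
  have ht₀0 : 0 ≤ t₀ := le_csSup hbdd h0A
  have ht₀t : t₀ ≤ t := csSup_le ⟨0, h0A⟩ (fun s hs => hs.1.2)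
  have ht₀r : t₀ < r := lt_of_le_of_lt ht₀t htr
  have hKpos : ∀ u : ℝ, 0 ≤ u → 0 < 5 * u + 2 / β := by
    intro u hu
    have : 0 < 2 / β := by positivity
    linarith
  have hlt : ∀ u, 0 ≤ u → u < t₀ → 1 ≤ G u := by
    intro u hu hut
    obtain ⟨s, hsA, hus⟩ := exists_lt_of_lt_csSup ⟨0, h0A⟩ hut
    exact hsA.2 u ⟨hu, hus.le⟩
  have hGt₀ : 1 ≤ G t₀ := by
    rcases eq_or_lt_of_le ht₀0 with h0 | h0
    · rw [← h0, hG0]; norm_num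
    · have hsub : Set.Ioo 0 t₀ ⊆ Set.Ico 0 r := fun v hv => ⟨hv.1.le, lt_trans hv.2 ht₀r⟩
      have hmemI : Set.Ico (0:ℝ) r ∈ 𝓝[<] t₀ :=
        Filter.mem_of_superset (Ioo_mem_nhdsLT_of_mem ⟨h0, le_refl t₀⟩) hsub
      have hTend : Filter.Tendsto G (𝓝[<] t₀) (𝓝 (G t₀)) :=
        ((hGcont t₀ ⟨ht₀0, ht₀r⟩).mono_left (nhdsWithin_le_of_mem hmemI))
      refine ge_of_tendsto hTend ?_
      exact Filter.mem_of_superset (Ioo_mem_nhdsLT_of_mem ⟨h0, le_refl t₀⟩)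
        (fun u hu => hlt u hu.1.le hu.2)
  have ht₀A : t₀ ∈ A := by
    refine ⟨⟨ht₀0, ht₀t⟩, fun u hu => ?_⟩
    rcases eq_or_lt_of_le hu.2 with h | h
    · rw [h]; exact hGt₀
    · exact hlt u hu.1 h
  suffices hsufft : t₀ = t by
    rw [hsufft] at ht₀A
    exact ht₀A.2
  by_contra htne
  have ht₀lt : t₀ < t := lt_of_le_of_ne ht₀t htne
  -- eventually 1 ≤ G on the right of t₀
  have hev : ∀ᶠ s in 𝓝[>] t₀, 1 ≤ G s := by
    rcases eq_or_lt_of_le hGt₀ with hGeq | hGgt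
    · -- derivative case
      have hGeq' : G t₀ = 1 := hGeq.symm
      have ht₀pos : 0 < t₀ := by
        rcases eq_or_lt_of_le ht₀0 with h0 | h0
        · exfalso; rw [← h0, hG0] at hGeq'; norm_num at hGeq'
        · exact h0
      have hHpos : ∀ u ∈ Set.Icc 0 t₀, 0 < H u := by
        intro u hu
        have h1 := ht₀A.2 u hu
        simp only [hGdef] at h1
        have h2 := hKpos u hu.1
        nlinarith
      have hφneg := phi'_neg r β H φ hsys hdata t₀ ht₀0 ht₀r hHpos t₀ ⟨ht₀0, le_refl t₀⟩
      have hHt₀ := hHpos t₀ ⟨ht₀0, le_refl t₀⟩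
      have h5 := derivH_bound r H φ hsys t₀ ht₀pos ht₀r hHt₀ hφneg
      have hIt : Set.Ico (0:ℝ) r ∈ 𝓝 t₀ :=
        Filter.mem_of_superset (isOpen_Ioo.mem_nhds ⟨ht₀pos, ht₀r⟩) Set.Ioo_subset_Ico_self
      have hHat : HasDerivAt H (deriv H t₀) t₀ :=
        ((hsys.1.contDiffAt hIt).differentiableAt one_ne_zero).hasDerivAt
      have hlin : HasDerivAt (fun s : ℝ => 5 * s + 2 / β) 5 t₀ := by
        simpa using ((hasDerivAt_id t₀).const_mul 5).add_const (2 / β)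
      have hGat : HasDerivAt G (deriv H t₀ * (5 * t₀ + 2 / β) + H t₀ * 5) t₀ := hHat.mul hlin
      have hK := hKpos t₀ ht₀0
      have hdpos : 0 < deriv H t₀ * (5 * t₀ + 2 / β) + H t₀ * 5 := by
        have hmul := mul_lt_mul_of_pos_right h5 hK
        have : H t₀ * (5 * t₀ + 2 / β) = 1 := by simpa [hGdef] using hGeq'
        nlinarith
      have hslope := hasDerivAt_iff_tendsto_slope.mp hGat
      have hev0 : ∀ᶠ s in 𝓝[≠] t₀, slope G t₀ s ∈ Set.Ioi (0:ℝ) :=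
        hslope.eventually (isOpen_Ioi.eventually_mem hdpos)
      have hev1 : ∀ᶠ s in 𝓝[>] t₀, slope G t₀ s ∈ Set.Ioi (0:ℝ) :=
        hev0.filter_mono (nhdsWithin_mono t₀ (fun s hs => Set.mem_compl_singleton_iff.mpr
          (ne_of_gt hs)))
      filter_upwards [hev1, self_mem_nhdsWithin] with s hs1 hs2
      have hst : (0:ℝ) < s - t₀ := sub_pos.mpr hs2
      rw [slope_def_field] at hs1
      have : 0 < (G s - G t₀) / (s - t₀) * (s - t₀) := mul_pos hs1 hst
      rw [div_mul_cancel₀ _ (ne_of_gt hst)] at this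
      rw [hGeq'] at this
      linarith
    · -- continuity case
      have hsub : Set.Ioo t₀ r ⊆ Set.Ico 0 r := fun v hv => ⟨le_trans ht₀0 hv.1.le, hv.2⟩
      have hmemI : Set.Ico (0:ℝ) r ∈ 𝓝[>] t₀ :=
        Filter.mem_of_superset (Ioo_mem_nhdsGT_of_mem ⟨le_refl t₀, ht₀r⟩) hsub
      have hTend : Filter.Tendsto G (𝓝[>] t₀) (𝓝 (G t₀)) :=
        ((hGcont t₀ ⟨ht₀0, ht₀r⟩).mono_left (nhdsWithin_le_of_mem hmemI))
      exact (hTend.eventually (isOpen_Ioi.eventually_mem hGgt)).mono fun s hs => le_of_lt hs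
  obtain ⟨u, hu, hsub2⟩ := mem_nhdsGT_iff_exists_Ioo_subset.mp hev
  have h1 : t₀ < min u t := lt_min hu ht₀lt
  set s := (t₀ + min u t) / 2 with hsdef
  have hs1 : t₀ < s := by rw [hsdef]; linarith
  have hs2 : s < min u t := by rw [hsdef]; linarith
  have hsA : s ∈ A := by
    refine ⟨⟨by linarith, le_of_lt (lt_of_lt_of_le hs2 (min_le_right u t))⟩, fun v hv => ?_⟩
    rcases le_or_gt v t₀ with h | h
    · exact ht₀A.2 v ⟨hv.1, h⟩
    · exact hsub2 ⟨h, lt_of_le_of_lt hv.2 (lt_of_lt_of_le hs2 (min_le_left u t))⟩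
  exact absurd (le_csSup hbdd hsA) (not_le.mpr hs1)

lemma key_lemma (r β : ℝ) (H φ : ℝ → ℝ) (hsys : EdGB H φ (Set.Ico 0 r))
    (hdata : NegBranchData H φ β) (t : ℝ) (ht0 : 0 < t) (htr : t < r) :
    1 / (5 * t + 1 / β) < H t := by
  have hβ := hdata.1
  have hH0 := hdata.2.2.1
  have hHpos : ∀ u ∈ Set.Icc 0 t, 0 < H u := by
    intro u hu
    have h1 := phase1 r β H φ hsys hdata t ht0 htr u hu
    have h2 : 0 < 5 * u + 2 / β := by
      have : 0 < 2 / β := by positivity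
      linarith [hu.1]
    nlinarith
  have hφneg := phi'_neg r β H φ hsys hdata t ht0.le htr hHpos
  set g : ℝ → ℝ := fun s => 5 * s + 1 / β - (H s)⁻¹ with hgdef
  have hIccsub : Set.Icc (0:ℝ) t ⊆ Set.Ico 0 r := fun v hv => ⟨hv.1, lt_of_le_of_lt hv.2 htr⟩
  have hHc : ContinuousOn H (Set.Icc 0 t) := hsys.1.continuousOn.mono hIccsub
  have hgcont : ContinuousOn g (Set.Icc 0 t) := by
    apply ContinuousOn.sub
    · fun_prop
    · exact hHc.inv₀ (fun u hu => ne_of_gt (hHpos u hu))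
  have hderiv : ∀ x ∈ interior (Set.Icc 0 t), 0 < deriv g x := by
    intro x hx
    rw [interior_Icc] at hx
    have hxr : x < r := lt_trans hx.2 htr
    have hxI : x ∈ Set.Icc (0:ℝ) t := ⟨hx.1.le, hx.2.le⟩
    have hHx := hHpos x hxI
    have hIt : Set.Ico (0:ℝ) r ∈ 𝓝 x :=
      Filter.mem_of_superset (isOpen_Ioo.mem_nhds ⟨hx.1, hxr⟩) Set.Ioo_subset_Ico_self
    have hHat : HasDerivAt H (deriv H x) x :=
      ((hsys.1.contDiffAt hIt).differentiableAt one_ne_zero).hasDerivAt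
    have hinv : HasDerivAt (fun s => (H s)⁻¹) (-deriv H x / H x ^ 2) x :=
      hHat.inv (ne_of_gt hHx)
    have hlin : HasDerivAt (fun s : ℝ => 5 * s + 1 / β) 5 x := by
      simpa using ((hasDerivAt_id x).const_mul 5).add_const (1 / β)
    have hgat : HasDerivAt g (5 - -deriv H x / H x ^ 2) x := hlin.sub hinv
    rw [hgat.deriv]
    have h5 := derivH_bound r H φ hsys x hx.1 hxr hHx (hφneg x hxI)
    have hH2 : 0 < H x ^ 2 := pow_pos hHx 2
    have : -deriv H x / H x ^ 2 < 5 := by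
      rw [div_lt_iff₀ hH2]; nlinarith
    linarith
  have hmono := strictMonoOn_of_deriv_pos (convex_Icc 0 t) hgcont hderiv
  have hgt : g 0 < g t := hmono ⟨le_refl 0, ht0.le⟩ ⟨ht0.le, le_refl t⟩ ht0
  have hg0 : g 0 = 0 := by
    simp only [hgdef, hH0, one_div]
    ring
  rw [hg0] at hgt
  have hHt := hHpos t ⟨ht0.le, le_refl t⟩
  have hK : 0 < 5 * t + 1 / β := by
    have : 0 < 1 / β := by positivity
    linarith
  rw [div_lt_iff₀ hK]
  have h1 : H t * (H t)⁻¹ = 1 := mul_inv_cancel₀ (ne_of_gt hHt)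
  have hginv : (H t)⁻¹ < 5 * t + 1 / β := by
    simp only [hgdef] at hgt; linarith
  nlinarith [mul_lt_mul_of_pos_left hginv hHt]

/-- If `(H, φ)` solves the EdGB FLRW system on `[0, b)` (with `b ∈ (0, +∞]`) with
the negative-branch initial data with parameter `β`, then
`H(t) > 1/(5t + 1/β) > 0` for all `t ∈ (0, b)`. -/
theorem stmt_7 (b : EReal) (hb : 0 < b) (β : ℝ) (H φ : ℝ → ℝ)
    (hsys : EdGB H φ {t : ℝ | 0 ≤ t ∧ (t : EReal) < b})
    (hdata : NegBranchData H φ β) :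
    ∀ t : ℝ, 0 < t → (t : EReal) < b →
      H t > 1 / (5 * t + 1 / β) ∧ 1 / (5 * t + 1 / β) > 0 := by
  intro t ht0 htb
  obtain ⟨x, htx, hxb⟩ := EReal.lt_iff_exists_real_btwn.mp htb
  have htx' : t < x := by exact_mod_cast htx
  have hsub : Set.Ico (0:ℝ) x ⊆ {t : ℝ | 0 ≤ t ∧ (t : EReal) < b} := by
    intro s hs
    refine ⟨hs.1, lt_trans ?_ hxb⟩
    exact_mod_cast hs.2
  have hsys' : EdGB H φ (Set.Ico 0 x) :=
    ⟨hsys.1.mono hsub, hsys.2.1.mono hsub, fun s hs => hsys.2.2.1 s (hsub hs),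
      fun s hs => hsys.2.2.2 s (hsub hs)⟩
  have hβ := hdata.1
  have hK : 0 < 5 * t + 1 / β := by
    have : 0 < 1 / β := by positivity
    linarith
  exact ⟨key_lemma x β H φ hsys' hdata t ht0 htx', by positivity⟩
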